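/- Let φ be a concave, signed-permutation-invariant function on positive semidefinite matrices of order p. If for every design measure ξ on a finite set S and every s ∈ S there is a signed permutation matrix R_s with M(s·ξ) = R_s^T M(ξ) R_s, and the average (1/|S|) ∑_{s∈S} M(s·ξ) equals M(ξ_0) for the uniform measure ξ_0, then φ(M(ξ)) ≤ φ(M(ξ_0)) for every design measure ξ; i.e., the uniform measure is φ-optimal. -/

import Mathlib

open Matrix

/-- A signed permutation matrix: each column has exactly one nonzero entry,
equal to `±1`. -/
def IsSignedPermMatrix {p : ℕ} (R : Matrix (Fin p) (Fin p) ℝ) : Prop :=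
  ∃ (σ : Equiv.Perm (Fin p)) (ε : Fin p → ℝ), (∀ i, ε i = 1 ∨ ε i = -1) ∧
    ∀ i j, R i j = if i = σ j then ε j else 0

/-- The moment matrix `M(ξ) = ∑_a ξ(a) x(a) x(a)ᵀ` of a design measure `ξ`. -/
noncomputable def momentOf {S : Type*} [Fintype S] {p : ℕ}
    (x : S → Fin p → ℝ) (ξ : S → ℝ) : Matrix (Fin p) (Fin p) ℝ :=
  ∑ a, ξ a • Matrix.vecMulVec (x a) (x a)

lemma psd_vecMulVec {p : ℕ} (u : Fin p → ℝ) :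
    (Matrix.vecMulVec u u).PosSemidef := by
  simpa using Matrix.posSemidef_vecMulVec_self_star u

lemma psd_smul {p : ℕ} {A : Matrix (Fin p) (Fin p) ℝ} (hA : A.PosSemidef)
    {c : ℝ} (hc : 0 ≤ c) : (c • A).PosSemidef := by
  exact hA.smul hc

lemma psd_sum {p : ℕ} {ι : Type*} (s : Finset ι) (A : ι → Matrix (Fin p) (Fin p) ℝ)
    (h : ∀ i ∈ s, (A i).PosSemidef) : (∑ i ∈ s, A i).PosSemidef := by
  classical
  induction s using Finset.induction_on with
  | empty => simpa using Matrix.PosSemidef.zero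
  | insert _ _ hni ih =>
    rw [Finset.sum_insert hni]
    exact (h _ (Finset.mem_insert_self _ _)).add
      (ih fun i hi => h i (Finset.mem_insert_of_mem hi))

lemma jensen_psd {p : ℕ} {ι : Type*}
    (φ : Matrix (Fin p) (Fin p) ℝ → ℝ)
    (hconc : ∀ A B : Matrix (Fin p) (Fin p) ℝ, A.PosSemidef → B.PosSemidef →
      ∀ t : ℝ, 0 ≤ t → t ≤ 1 →
        t * φ A + (1 - t) * φ B ≤ φ (t • A + (1 - t) • B))
    (s : Finset ι) (w : ι → ℝ) (A : ι → Matrix (Fin p) (Fin p) ℝ) :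
    (∀ i ∈ s, 0 ≤ w i) → (∀ i ∈ s, (A i).PosSemidef) → (∑ i ∈ s, w i) = 1 →
    ∑ i ∈ s, w i * φ (A i) ≤ φ (∑ i ∈ s, w i • A i) := by
  classical
  induction s using Finset.induction_on generalizing w with
  | empty => intro _ _ h; simp at h
  | @insert a t hat ih =>
    intro hw hA hsum
    rw [Finset.sum_insert hat] at hsum ⊢
    rw [Finset.sum_insert hat]
    have hwa : 0 ≤ w a := hw a (Finset.mem_insert_self _ _)
    have hwt : ∀ i ∈ t, 0 ≤ w i := fun i hi => hw i (Finset.mem_insert_of_mem hi)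
    have hAt : ∀ i ∈ t, (A i).PosSemidef := fun i hi => hA i (Finset.mem_insert_of_mem hi)
    set c : ℝ := ∑ i ∈ t, w i with hc
    have hc0 : 0 ≤ c := Finset.sum_nonneg hwt
    have hca : w a + c = 1 := hsum
    by_cases hcz : c = 0
    · -- all weights in t are zero
      have hz : ∀ i ∈ t, w i = 0 := by
        intro i hi
        exact (Finset.sum_eq_zero_iff_of_nonneg hwt).mp hcz i hi
      have h1 : ∑ i ∈ t, w i * φ (A i) = 0 :=
        Finset.sum_eq_zero fun i hi => by rw [hz i hi, zero_mul]
      have h2 : ∑ i ∈ t, w i • A i = 0 :=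
        Finset.sum_eq_zero fun i hi => by rw [hz i hi, zero_smul]
      have hwa1 : w a = 1 := by rw [hcz, add_zero] at hca; exact hca
      rw [h1, h2, hwa1, add_zero, one_mul, one_smul, add_zero]
    · have hcpos : 0 < c := lt_of_le_of_ne hc0 (Ne.symm hcz)
      -- normalized measure on t
      have hsum' : ∑ i ∈ t, w i / c = 1 := by
        rw [← Finset.sum_div, ← hc, div_self hcz]
      have hIH := ih (fun i => w i / c) (fun i hi => div_nonneg (hwt i hi) hc0) hAt hsum'
      set B : Matrix (Fin p) (Fin p) ℝ := ∑ i ∈ t, (w i / c) • A i with hB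
      have hBpsd : B.PosSemidef := psd_sum t _ fun i hi =>
        psd_smul (hAt i hi) (div_nonneg (hwt i hi) hc0)
      have hApsd : (A a).PosSemidef := hA a (Finset.mem_insert_self _ _)
      have hwa1 : w a ≤ 1 := by linarith
      have h1c : 1 - w a = c := by linarith
      have key := hconc (A a) B hApsd hBpsd (w a) hwa hwa1
      rw [h1c] at key
      have hcB : c • B = ∑ i ∈ t, w i • A i := by
        rw [hB, Finset.smul_sum]
        exact Finset.sum_congr rfl fun i hi => by
          rw [smul_smul, mul_div_cancel₀ _ hcz]
      rw [hcB] at key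
      refine le_trans ?_ key
      have : c * (∑ i ∈ t, (w i / c) * φ (A i)) = ∑ i ∈ t, w i * φ (A i) := by
        rw [Finset.mul_sum]
        exact Finset.sum_congr rfl fun i hi => by
          rw [← mul_assoc, mul_div_cancel₀ _ hcz]
      have h2 : ∑ i ∈ t, w i * φ (A i) ≤ c * φ B := by
        rw [← this]
        exact mul_le_mul_of_nonneg_left hIH hc0
      linarith

lemma conj_vecMulVec {p : ℕ} (u : Fin p → ℝ) (Q : Matrix (Fin p) (Fin p) ℝ) :
    Qᵀ * Matrix.vecMulVec u u * Q = Matrix.vecMulVec (u ᵥ* Q) (u ᵥ* Q) := by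
  ext i j
  simp only [Matrix.mul_apply, Matrix.vecMulVec_apply, Matrix.transpose_apply,
    Matrix.vecMul, dotProduct, Finset.sum_mul, Finset.mul_sum]
  exact Finset.sum_congr rfl fun k _ => Finset.sum_congr rfl fun l _ => by ring

theorem stmt14 {S : Type*} [Group S] [Fintype S] {p : ℕ}
    (x : S → Fin p → ℝ) (R : S → Matrix (Fin p) (Fin p) ℝ)
    (hR : ∀ s, IsSignedPermMatrix (R s))
    (hx : ∀ s a, x (s * a) = Matrix.vecMul (x a) (R s))
    (φ : Matrix (Fin p) (Fin p) ℝ → ℝ)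
    (hconc : ∀ A B : Matrix (Fin p) (Fin p) ℝ, A.PosSemidef → B.PosSemidef →
      ∀ t : ℝ, 0 ≤ t → t ≤ 1 →
        t * φ A + (1 - t) * φ B ≤ φ (t • A + (1 - t) • B))
    (hinv : ∀ (M Q : Matrix (Fin p) (Fin p) ℝ), IsSignedPermMatrix Q →
      φ (Qᵀ * M * Q) = φ M)
    (ξ : S → ℝ) (hξ0 : ∀ a, 0 ≤ ξ a) (hξ1 : ∑ a, ξ a = 1) :
    φ (momentOf x ξ) ≤ φ (momentOf x fun _ => ((Fintype.card S : ℝ))⁻¹) := by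
  classical
  set M : Matrix (Fin p) (Fin p) ℝ := momentOf x ξ with hM
  -- conjugated moment matrices
  have hconj : ∀ s : S, (R s)ᵀ * M * R s =
      ∑ b : S, ξ b • Matrix.vecMulVec (x (s * b)) (x (s * b)) := by
    intro s
    rw [hM, momentOf, Matrix.mul_sum, Matrix.sum_mul]
    exact Finset.sum_congr rfl fun b _ => by
      rw [Matrix.mul_smul, Matrix.smul_mul, conj_vecMulVec, ← hx]
  -- M is PSD
  have hMpsd : M.PosSemidef := by
    rw [hM, momentOf]
    exact psd_sum _ _ fun a _ => psd_smul (psd_vecMulVec (x a)) (hξ0 a)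
  set A : S → Matrix (Fin p) (Fin p) ℝ := fun s => (R s)ᵀ * M * R s with hA
  have hApsd : ∀ s, (A s).PosSemidef := by
    intro s
    have := hMpsd.conjTranspose_mul_mul_same (R s)
    have hct : (R s)ᴴ = (R s)ᵀ := by
      ext i j; simp [Matrix.conjTranspose_apply]
    rwa [hct] at this
  have hcard : (0 : ℝ) < Fintype.card S := by
    exact_mod_cast Fintype.card_pos
  set w : S → ℝ := fun _ => ((Fintype.card S : ℝ))⁻¹ with hw
  have hwsum : (∑ s : S, w s) = 1 := by
    rw [Finset.sum_const, Finset.card_univ, nsmul_eq_mul]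
    exact mul_inv_cancel₀ (ne_of_gt hcard)
  set T : Matrix (Fin p) (Fin p) ℝ := ∑ c : S, Matrix.vecMulVec (x c) (x c) with hT
  have hsumA : (∑ s : S, A s) = T := by
    rw [Finset.sum_congr rfl fun s _ => hconj s, Finset.sum_comm]
    have h3 : ∀ b : S, ∑ s : S, ξ b • Matrix.vecMulVec (x (s * b)) (x (s * b))
        = ξ b • T := by
      intro b
      rw [hT, Finset.smul_sum]
      exact Fintype.sum_equiv (Equiv.mulRight b) _ _ (fun s => rfl)
    rw [Finset.sum_congr rfl fun b _ => h3 b, ← Finset.sum_smul, hξ1, one_smul]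
  have havg : (∑ s : S, w s • A s) = momentOf x w := by
    simp only [hw, momentOf]
    rw [← Finset.smul_sum, hsumA, hT, Finset.smul_sum]
  have hjen := jensen_psd φ hconc Finset.univ w A
    (fun i _ => inv_nonneg.mpr (le_of_lt hcard)) (fun i _ => hApsd i) hwsum
  rw [havg] at hjen
  have hval : ∀ s : S, φ (A s) = φ M := fun s => hinv M (R s) (hR s)
  have hlhs : (∑ s : S, w s * φ (A s)) = φ M := by
    rw [Finset.sum_congr rfl fun s _ => by rw [hval s], ← Finset.sum_mul, hwsum, one_mul]
  rw [hlhs] at hjen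
  exact hjen
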